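/- Under assumptions (A1), (Aa) and (Ab), for every x ∈ Ḡ and every γ ∈ E the set 𝒜_{γ,x} of admissible controls is nonempty; that is, there exist a Borel measurable α : [0,∞) → A and an absolutely continuous y : [0,∞) → ℝ^m with y(t) = x + ∫_0^t f_γ(y(s), α(s)) ds and y(t) ∈ Ḡ for all t ≥ 0. -/

import Mathlib

open MeasureTheory Set Real Filter
open scoped RealInnerProductSpace BigOperators Topology

noncomputable section

/-- `Vec n` is Euclidean space `ℝ^n`. -/
abbrev Vec (n : ℕ) : Type := EuclideanSpace ℝ (Fin n)

/-- `y` is the (absolutely continuous) trajectory of the controlled ODE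
`y'(t) = f(y(t), α(t))`, `y(0) = x`, written in integral form. -/
def IsTraj {m : ℕ} {U : Type} (f : Vec m → U → Vec m) (x : Vec m) (α : ℝ → U)
    (y : ℝ → Vec m) : Prop :=
  ∀ t : ℝ, 0 ≤ t → y t = x + ∫ s in (0:ℝ)..t, f (y s) (α s)

/-- `(α, y)` is an admissible control/trajectory pair: `α` is Borel measurable with
values in `A`, `y` is the corresponding trajectory and it stays in `S` for `t ≥ 0`. -/
def AdmPair {m : ℕ} {U : Type} [MeasurableSpace U] (f : Vec m → U → Vec m)
    (A : Set U) (S : Set (Vec m)) (x : Vec m) (α : ℝ → U) (y : ℝ → Vec m) : Prop :=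
  Measurable α ∧ (∀ t : ℝ, α t ∈ A) ∧ IsTraj f x α y ∧ ∀ t : ℝ, 0 ≤ t → y t ∈ S

/-- The closed star-shaped network `Ḡ = ∪_j [0,1] e_j`. -/
def Gbar {m N : ℕ} (e : Fin N → Vec m) : Set (Vec m) :=
  ⋃ j, (fun r : ℝ => r • e j) '' Icc (0:ℝ) 1

/-- `𝒢 = ∪_j [0,1) e_j`. -/
def GbarOpen {m N : ℕ} (e : Fin N → Vec m) : Set (Vec m) :=
  ⋃ j, (fun r : ℝ => r • e j) '' Ico (0:ℝ) 1

/-- The open branch `J_j = (0,1) e_j`. -/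
def Jbranch {m N : ℕ} (e : Fin N → Vec m) (j : Fin N) : Set (Vec m) :=
  (fun r : ℝ => r • e j) '' Ioo (0:ℝ) 1

/-- The constant control `a` is locally admissible at `x` (keeps some trajectory in `S`
on a nontrivial interval `[0,θ]`). -/
def LocAdm {m : ℕ} {U : Type} (f : Vec m → U → Vec m) (S : Set (Vec m)) (x : Vec m)
    (a : U) : Prop :=
  ∃ θ > (0:ℝ), ∃ y : ℝ → Vec m,
    IsTraj f x (fun _ => a) y ∧ ∀ t ∈ Icc (0:ℝ) θ, y t ∈ S

/-- The set `A_{γ,x}` of locally admissible constant controls at `x`. -/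
def LocAdmSet {m : ℕ} {U : Type} (f : Vec m → U → Vec m) (A : Set U) (S : Set (Vec m))
    (x : Vec m) : Set U :=
  {a ∈ A | LocAdm f S x a}

/-- Assumption (A1). -/
def AssumptionA1 {m d : ℕ} {E : Type} (A : Set (Vec d)) (f : E → Vec m → Vec d → Vec m)
    (C : ℝ) : Prop :=
  ∀ γ : E, UniformContinuousOn (fun p : Vec m × Vec d => f γ p.1 p.2) (univ ×ˢ A) ∧
    (∀ x y : Vec m, ∀ a ∈ A, ⟪f γ x a - f γ y a, x - y⟫ ≤ C * ‖x - y‖ ^ 2) ∧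
    (∀ x : Vec m, ∀ a ∈ A, ‖f γ x a‖ ≤ C)

/-- Assumption (A2). -/
def AssumptionA2 {m d : ℕ} {E : Type} (A : Set (Vec d))
    (lam : Vec m → E → Vec d → ℝ) (C : ℝ) : Prop :=
  ∀ γ : E, UniformContinuousOn (fun p : Vec m × Vec d => lam p.1 γ p.2) (univ ×ˢ A) ∧
    ∀ x y : Vec m, ∀ a ∈ A, 0 ≤ lam x γ a ∧ lam x γ a ≤ C ∧
      |lam x γ a - lam y γ a| ≤ C * ‖x - y‖

/-- Assumption (A3). -/
def AssumptionA3 {m d : ℕ} {E : Type} [Fintype E] (A : Set (Vec d))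
    (Q : Vec m → E → E → Vec d → ℝ) (C : ℝ) : Prop :=
  ∀ (x y : Vec m) (γ : E), ∀ a ∈ A,
    (∀ γ' : E, 0 ≤ Q x γ γ' a ∧ Q x γ γ' a ≤ 1) ∧
    (∑ γ' : E, Q x γ γ' a) = 1 ∧ Q x γ γ a = 0 ∧
    (∀ γ' : E, |Q x γ γ' a - Q y γ γ' a| ≤ C * ‖x - y‖)

/-- Assumption (A4). -/
def AssumptionA4 {m d : ℕ} {E : Type} (A : Set (Vec d)) (l : E → Vec m → Vec d → ℝ)
    (C : ℝ) : Prop :=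
  ∀ γ : E, UniformContinuousOn (fun p : Vec m × Vec d => l γ p.1 p.2) (univ ×ˢ A) ∧
    ∀ x y : Vec m, ∀ a ∈ A, |l γ x a| ≤ C ∧ |l γ x a - l γ y a| ≤ C * ‖x - y‖

/-- Assumption (Aa). -/
def AssumptionAa {m d N : ℕ} {E : Type} (e : Fin N → Vec m) (A : Set (Vec d))
    (f : E → Vec m → Vec d → Vec m) (Asets : E → Fin N → Set (Vec d)) (β : ℝ) : Prop :=
  (∀ (γ : E) (j : Fin N), (Asets γ j).Nonempty ∧ Asets γ j ⊆ A) ∧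
  (∀ (γ : E) (j : Fin N), ∀ x ∈ Jbranch e j,
      LocAdmSet (f γ) A (Gbar e) x = Asets γ j) ∧
  (∀ γ : E, LocAdmSet (f γ) A (Gbar e) 0
      = ⋃ j, {a ∈ Asets γ j | ∃ r : ℝ, 0 ≤ r ∧ f γ 0 a = r • e j}) ∧
  (∀ (γ : E) (j : Fin N),
      LocAdmSet (f γ) A (Gbar e) (e j) = {a ∈ Asets γ j | ⟪f γ (e j) a, e j⟫ ≤ 0} ∧
      {a ∈ Asets γ j | ⟪f γ (e j) a, e j⟫ ≤ 0}.Nonempty) ∧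
  (∀ (γ : E) (j : Fin N),
      {a ∈ Asets γ j | ⟪f γ (e j) a, e j⟫ ≤ 0} = Asets γ j ∨
      ∃ a ∈ Asets γ j, ⟪f γ (e j) a, e j⟫ < -β)

/-- Assumption (Ab); `act j` is the set of modes for which branch `j` is active. -/
def AssumptionAb {m d N : ℕ} {E : Type} (e : Fin N → Vec m)
    (f : E → Vec m → Vec d → Vec m) (Asets : E → Fin N → Set (Vec d))
    (act : Fin N → Set E) (β η κ : ℝ) : Prop :=
  (∀ (j : Fin N), ∀ γ ∈ act j,
      ∃ ap ∈ Asets γ j, ∃ am ∈ Asets γ j,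
        β < ⟪f γ 0 ap, e j⟫ ∧ ⟪f γ 0 am, e j⟫ < -β) ∧
  (∀ (j : Fin N), ∀ γ : E, γ ∉ act j →
      (∃ am ∈ Asets γ j, ∀ x ∈ Jbranch e j, ‖x‖ ≤ η →
          ⟪f γ x am, e j⟫ ≤ -β * ⟪x, e j⟫ ^ κ) ∧
      (∃ a0 ∈ Asets γ j, f γ 0 a0 = 0) ∧
      (∀ a ∈ Asets γ j, ∀ x ∈ Jbranch e j, ‖x‖ ≤ η → ⟪f γ x a, e j⟫ ≤ 0))

/-- Assumption (Ac). -/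
def AssumptionAc {m d N : ℕ} {E : Type} (l : E → Vec m → Vec d → ℝ)
    (Asets : E → Fin N → Set (Vec d)) (act : Fin N → Set E) : Prop :=
  ∀ (j : Fin N), ∀ γ : E, γ ∉ act j →
    ∀ a ∈ Asets γ j, ∀ b ∈ Asets γ j, l γ 0 a = l γ 0 b

/-- Assumption (Ac'). -/
def AssumptionAc' {m d N : ℕ} {E : Type} (lam : Vec m → E → Vec d → ℝ)
    (Q : Vec m → E → E → Vec d → ℝ) (Asets : E → Fin N → Set (Vec d))
    (act : Fin N → Set E) : Prop :=
  ∀ (j : Fin N), ∀ γ : E, γ ∉ act j → ∀ a ∈ Asets γ j, ∀ b ∈ Asets γ j,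
    lam 0 γ a = lam 0 γ b ∧ ∀ γ' : E, Q 0 γ γ' a = Q 0 γ γ' b

/-- Assumption (Ad). -/
def AssumptionAd {m d N : ℕ} {E : Type} (e : Fin N → Vec m) (A : Set (Vec d))
    (f : E → Vec m → Vec d → Vec m) (Asets : E → Fin N → Set (Vec d)) : Prop :=
  ∀ (j : Fin N) (γ : E), ∀ x ∈ Jbranch e j, ∃ θ > (0:ℝ),
    ∀ (α : ℝ → Vec d) (y : ℝ → Vec m), AdmPair (f γ) A (Gbar e) x α y →
      ∀ᵐ t ∂(volume.restrict (Icc (0:ℝ) θ)), α t ∈ Asets γ j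

/-- The set of discounted costs of admissible control/trajectory pairs (deterministic
problem); its infimum is the value function `v_0^δ`. -/
def v0Set {m : ℕ} {U E : Type} [MeasurableSpace U] (δ : ℝ)
    (f : E → Vec m → U → Vec m) (A : E → Set U) (S : Set (Vec m))
    (l : E → Vec m → U → ℝ) (x : Vec m) (γ : E) : Set ℝ :=
  {c | ∃ (α : ℝ → U) (y : ℝ → Vec m), AdmPair (f γ) (A γ) S x α y ∧
        c = ∫ t in Ioi (0:ℝ), exp (-(δ * t)) * l γ (y t) (α t)}

/-- The set of one-jump iterated discounted costs with continuation value `w`;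
its infimum is the iterated value function  `v_{m+1}^δ` when `w = v_m^δ`. -/
def iterSet {m : ℕ} {U E : Type} [MeasurableSpace U] [Fintype E] (δ : ℝ)
    (f : E → Vec m → U → Vec m) (A : E → Set U) (S : Set (Vec m))
    (l : E → Vec m → U → ℝ) (lam : Vec m → E → U → ℝ)
    (Q : Vec m → E → E → U → ℝ) (w : Vec m → E → ℝ) (x : Vec m) (γ : E) : Set ℝ :=
  {c | ∃ (α : ℝ → U) (y : ℝ → Vec m), AdmPair (f γ) (A γ) S x α y ∧
        c = ∫ t in Ioi (0:ℝ),
              exp (-(δ * t)) * exp (-(∫ s in (0:ℝ)..t, lam (y s) γ (α s))) *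
              (l γ (y t) (α t) +
                lam (y t) γ (α t) * ∑ γ' : E, Q (y t) γ γ' (α t) * w (y t) γ')}

/-- The set of costs appearing in the dynamic programming principle on horizon `T`,
with running continuation value `wcont` and terminal value `wend`. -/
def dppSet {m : ℕ} {U E : Type} [MeasurableSpace U] [Fintype E] (δ T : ℝ)
    (f : E → Vec m → U → Vec m) (A : E → Set U) (S : Set (Vec m))
    (l : E → Vec m → U → ℝ) (lam : Vec m → E → U → ℝ)
    (Q : Vec m → E → E → U → ℝ) (wcont wend : Vec m → E → ℝ)
    (x : Vec m) (γ : E) : Set ℝ :=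
  {c | ∃ (α : ℝ → U) (y : ℝ → Vec m), AdmPair (f γ) (A γ) S x α y ∧
        c = (∫ t in (0:ℝ)..T,
              exp (-(δ * t)) * exp (-(∫ s in (0:ℝ)..t, lam (y s) γ (α s))) *
              (l γ (y t) (α t) +
                lam (y t) γ (α t) * ∑ γ' : E, Q (y t) γ γ' (α t) * wcont (y t) γ'))
            + exp (-(δ * T)) * exp (-(∫ s in (0:ℝ)..T, lam (y s) γ (α s)))
              * wend (y T) γ}

/-- The tangent cone `T_x(Ḡ)` to the star network at `x`. -/
def TangentG {m N : ℕ} (e : Fin N → Vec m) (x : Vec m) : Set (Vec m) :=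
  {ξ | (x = 0 ∧ ∃ (j : Fin N) (r : ℝ), 0 ≤ r ∧ ξ = r • e j) ∨
       (∃ j : Fin N, x = e j ∧ ∃ r : ℝ, r ≤ 0 ∧ ξ = r • e j) ∨
       (∃ j : Fin N, x ∈ Jbranch e j ∧ ∃ r : ℝ, ξ = r • e j)}

/-- `fl(x,γ,a) = (f_γ(x,a), λ(x,γ,a) Q(x,γ,·,a), l_γ(x,a))`. -/
def flMap {m d : ℕ} {E : Type} (f : E → Vec m → Vec d → Vec m)
    (lam : Vec m → E → Vec d → ℝ) (Q : Vec m → E → E → Vec d → ℝ)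
    (l : E → Vec m → Vec d → ℝ) (x : Vec m) (γ : E) :
    Vec d → Vec m × (E → ℝ) × ℝ :=
  fun a => (f γ x a, fun γ' => lam x γ a * Q x γ γ' a, l γ x a)

/-- The set `FL(x,γ)` of relaxed dynamics/jump/cost limits. -/
def FLset {m d N : ℕ} {E : Type} [Fintype E] (e : Fin N → Vec m) (A : Set (Vec d))
    (f : E → Vec m → Vec d → Vec m) (lam : Vec m → E → Vec d → ℝ)
    (Q : Vec m → E → E → Vec d → ℝ) (l : E → Vec m → Vec d → ℝ)
    (x : Vec m) (γ : E) : Set (Vec m × (E → ℝ) × ℝ) :=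
  {p | p.1 ∈ TangentG e x ∧ (∀ γ' : E, 0 ≤ p.2.1 γ') ∧
    ∃ (αs : ℕ → ℝ → Vec d) (ys : ℕ → ℝ → Vec m) (ts : ℕ → ℝ),
      (∀ n, AdmPair (f γ) A (Gbar e) x (αs n) (ys n)) ∧
      (∀ n, 0 < ts n) ∧ Tendsto ts atTop (nhds 0) ∧
      Tendsto (fun n => (ts n)⁻¹ • (∫ s in (0:ℝ)..ts n, f γ x (αs n s)))
        atTop (nhds p.1) ∧
      (∀ γ' : E, Tendsto
          (fun n => (ts n)⁻¹ * ∫ s in (0:ℝ)..ts n, lam x γ (αs n s) * Q x γ γ' (αs n s))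
          atTop (nhds (p.2.1 γ'))) ∧
      Tendsto (fun n => (ts n)⁻¹ * ∫ s in (0:ℝ)..ts n, l γ x (αs n s))
        atTop (nhds p.2.2)}



/-- Regularity: any solution of the integral equation with measurable control and
bounded dynamics is interval-integrable and Lipschitz on `[0,T]`. -/
lemma trajReg {m d : ℕ} {F : Vec m → Vec d → Vec m} {A : Set (Vec d)} {C : ℝ}
    (hFc : ContinuousOn (fun p : Vec m × Vec d => F p.1 p.2) (univ ×ˢ A))
    (hAm : MeasurableSet A)
    (hFb : ∀ z : Vec m, ∀ a ∈ A, ‖F z a‖ ≤ C)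
    {α : ℝ → Vec d} (hα : Measurable α) (hαA : ∀ t, α t ∈ A)
    {x : Vec m} {y : ℝ → Vec m} {T : ℝ} (hT : 0 ≤ T)
    (heq : ∀ t ∈ Icc (0:ℝ) T, y t = x + ∫ s in (0:ℝ)..t, F (y s) (α s)) :
    (∀ t ∈ Icc (0:ℝ) T, IntervalIntegrable (fun s => F (y s) (α s)) volume 0 t) ∧
    (∀ s ∈ Icc (0:ℝ) T, ∀ t ∈ Icc (0:ℝ) T, s ≤ t → ‖y t - y s‖ ≤ C * (t - s)) := by
  classical
  set g : ℝ → Vec m := fun s => F (y s) (α s) with hg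
  have hC0 : 0 ≤ C := le_trans (norm_nonneg _) (hFb x _ (hαA 0))
  have hgb : ∀ s, ‖g s‖ ≤ C := fun s => hFb _ _ (hαA s)
  set S : Set ℝ := {t | t ∈ Icc (0:ℝ) T ∧ IntervalIntegrable g volume 0 t} with hSdef
  have hsub : ∀ {t t' : ℝ}, 0 ≤ t' → t' ≤ t → uIcc (0:ℝ) t' ⊆ uIcc (0:ℝ) t := by
    intro t t' h0 h1
    rw [uIcc_of_le h0, uIcc_of_le (le_trans h0 h1)]
    exact Icc_subset_Icc le_rfl h1
  have hmono : ∀ {t t' : ℝ}, t ∈ S → t' ∈ Icc (0:ℝ) T → t' ≤ t → t' ∈ S := by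
    intro t t' ht ht' hle
    exact ⟨ht', ht.2.mono_set (hsub ht'.1 hle)⟩
  have hval : ∀ t ∈ S, y t = x + ∫ s in (0:ℝ)..t, g s := fun t ht => heq t ht.1
  have hoff : ∀ t ∈ Icc (0:ℝ) T, t ∉ S → y t = x := by
    intro t ht hns
    have hni : ¬ IntervalIntegrable g volume 0 t := fun h => hns ⟨ht, h⟩
    rw [heq t ht, intervalIntegral.integral_undef hni, add_zero]
  have hlipS : ∀ s ∈ S, ∀ t ∈ S, s ≤ t → ‖y t - y s‖ ≤ C * (t - s) := by
    intro s hs t ht hst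
    have h1 : IntervalIntegrable g volume 0 s := hs.2
    have h2 : IntervalIntegrable g volume s t := by
      apply ht.2.mono_set
      rw [uIcc_of_le hst, uIcc_of_le ht.1.1]
      exact Icc_subset_Icc hs.1.1 le_rfl
    have hyts : y t - y s = ∫ u in s..t, g u := by
      rw [hval s hs, hval t ht, ← intervalIntegral.integral_add_adjacent_intervals h1 h2]
      abel
    rw [hyts]
    calc ‖∫ u in s..t, g u‖ ≤ C * |t - s| :=
          intervalIntegral.norm_integral_le_of_norm_le_const (fun u _ => hgb u)
      _ = C * (t - s) := by rw [abs_of_nonneg (sub_nonneg.2 hst)]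
  have hSord : S.OrdConnected := by
    constructor
    intro s hs t ht u hu
    exact hmono ht ⟨le_trans hs.1.1 hu.1, le_trans hu.2 ht.1.2⟩ hu.2
  have hSmeas : MeasurableSet S := hSord.measurableSet
  -- key integrability on [0, T]
  have key : IntervalIntegrable g volume 0 T := by
    rw [intervalIntegrable_iff_integrableOn_Ioc_of_le hT]
    have hlip : LipschitzOnWith C.toNNReal y S := by
      apply LipschitzOnWith.of_dist_le_mul
      intro s hs t ht
      rw [dist_eq_norm, Real.dist_eq, Real.coe_toNNReal _ hC0]
      rcases le_total s t with h | h
      · rw [norm_sub_rev, abs_sub_comm, abs_of_nonneg (sub_nonneg.2 h)]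
        exact hlipS s hs t ht h
      · rw [abs_of_nonneg (sub_nonneg.2 h)]
        exact hlipS t ht s hs h
    have h1 : AEStronglyMeasurable y (volume.restrict (Ioc 0 T ∩ S)) := by
      exact ((hlip.mono inter_subset_right).continuousOn).aestronglyMeasurable
        (measurableSet_Ioc.inter hSmeas)
    have h2 : AEStronglyMeasurable y (volume.restrict (Ioc 0 T \ S)) := by
      refine (aestronglyMeasurable_const (b := x)).congr ?_
      refine ((ae_restrict_iff' (measurableSet_Ioc.diff hSmeas)).2 (Eventually.of_forall ?_))
      intro t ht
      exact (hoff t ⟨le_of_lt ht.1.1, ht.1.2⟩ ht.2).symm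
    have hle : volume.restrict (Ioc (0:ℝ) T)
        ≤ volume.restrict (Ioc 0 T ∩ S) + volume.restrict (Ioc 0 T \ S) := by
      nth_rewrite 1 [← inter_union_diff (Ioc (0:ℝ) T) S]
      exact Measure.restrict_union_le _ _
    have hy : AEStronglyMeasurable y (volume.restrict (Ioc 0 T)) :=
      (h1.add_measure h2).mono_measure hle
    obtain ⟨yy, hyym, hyye⟩ := hy.aemeasurable
    have hKm : MeasurableSet ((univ ×ˢ A : Set (Vec m × Vec d))) :=
      MeasurableSet.univ.prod hAm
    have hmem : ∀ s, ((yy s, α s) : Vec m × Vec d) ∈ (univ ×ˢ A : Set (Vec m × Vec d)) :=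
      fun s => ⟨mem_univ _, hαA s⟩
    have hsubm : Measurable (fun s => (⟨(yy s, α s), hmem s⟩ :
        (univ ×ˢ A : Set (Vec m × Vec d)))) :=
      Measurable.subtype_mk (hyym.prodMk hα)
    have hFr : Continuous ((univ ×ˢ A : Set (Vec m × Vec d)).restrict
        (fun p : Vec m × Vec d => F p.1 p.2)) := hFc.restrict
    have hGm : Measurable (fun s => F (yy s) (α s)) := hFr.measurable.comp hsubm
    have hgae : (fun s => F (yy s) (α s)) =ᵐ[volume.restrict (Ioc (0:ℝ) T)] g := by
      filter_upwards [hyye] with s hs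
      simp only [hg]
      rw [hs]
    exact Integrable.mono' (integrable_const C)
      (hGm.aestronglyMeasurable.congr hgae) (Eventually.of_forall hgb)
  have hall : ∀ t ∈ Icc (0:ℝ) T, t ∈ S := fun t ht => ⟨ht, key.mono_set (hsub ht.1 ht.2)⟩
  exact ⟨fun t ht => (hall t ht).2,
    fun s hs t ht hst => hlipS s (hall s hs) t (hall t ht) hst⟩


lemma gbar_closed {m N : ℕ} (e : Fin N → Vec m) : IsClosed (Gbar e) := by
  apply isClosed_iUnion_of_finite
  intro j
  exact (isCompact_Icc.image (by continuity)).isClosed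

lemma lipschitzOnIcc {m : ℕ} {C T : ℝ} {y : ℝ → Vec m} (hC0 : 0 ≤ C)
    (h : ∀ s ∈ Icc (0:ℝ) T, ∀ t ∈ Icc (0:ℝ) T, s ≤ t → ‖y t - y s‖ ≤ C * (t - s)) :
    ContinuousOn y (Icc (0:ℝ) T) := by
  apply LipschitzOnWith.continuousOn (K := C.toNNReal)
  apply LipschitzOnWith.of_dist_le_mul
  intro s hs t ht
  rw [dist_eq_norm, Real.dist_eq, Real.coe_toNNReal _ hC0]
  rcases le_total s t with hle | hle
  · rw [norm_sub_rev, abs_sub_comm, abs_of_nonneg (sub_nonneg.2 hle)]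
    exact h s hs t ht hle
  · rw [abs_of_nonneg (sub_nonneg.2 hle)]
    exact h t ht s hs hle

lemma gbar_localSpan {m N : ℕ} {e : Fin N → Vec m} (he : ∀ j, ‖e j‖ = 1)
    (heinj : Function.Injective e) (j : Fin N) {ρ : ℝ} (hρ : 0 < ρ) :
    ∃ r > 0, ∀ p ∈ Gbar e, ‖p - ρ • e j‖ < r →
      p ∈ Submodule.span ℝ ({e j} : Set (Vec m)) := by
  set z := ρ • e j with hzdef
  set K : Set (Vec m) := ⋃ k ∈ ({j}ᶜ : Set (Fin N)), (fun r : ℝ => r • e k) '' Icc 0 1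
    with hKdef
  have hKcl : IsClosed K := by
    apply Set.Finite.isClosed_biUnion (Set.toFinite _)
    intro k _
    exact (isCompact_Icc.image (by continuity)).isClosed
  have hzK : z ∉ K := by
    intro hz
    rw [hKdef, mem_iUnion₂] at hz
    obtain ⟨k, hk, s, hs, hsk⟩ := hz
    have h1 : ‖z‖ = ρ := by
      rw [hzdef, norm_smul, Real.norm_eq_abs, he j, abs_of_pos hρ, mul_one]
    have h2 : ‖z‖ = s := by
      rw [← hsk]
      simp only []
      rw [norm_smul, Real.norm_eq_abs, he k, abs_of_nonneg hs.1, mul_one]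
    have hsρ : s = ρ := by rw [← h2, h1]
    rw [hsρ] at hsk
    have : e k = e j := smul_right_injective (Vec m) (ne_of_gt hρ) hsk
    exact hk (heinj this)
  obtain ⟨r, hr, hball⟩ := Metric.isOpen_iff.1 hKcl.isOpen_compl z hzK
  refine ⟨r, hr, ?_⟩
  intro p hp hdist
  rw [Gbar, mem_iUnion] at hp
  obtain ⟨k, s, hs, hpk⟩ := hp
  by_cases hkj : k = j
  · subst hkj
    rw [← hpk]
    exact Submodule.smul_mem _ s (Submodule.mem_span_singleton_self _)
  · exfalso
    have hpK : p ∈ K := by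
      rw [hKdef, mem_iUnion₂]
      exact ⟨k, fun h => hkj h, s, hs, hpk⟩
    exact hball (by rwa [Metric.mem_ball, dist_eq_norm]) hpK

lemma branch_parallel {m d N : ℕ} {F : Vec m → Vec d → Vec m} {A : Set (Vec d)} {C : ℝ}
    (hFc : ContinuousOn (fun p : Vec m × Vec d => F p.1 p.2) (univ ×ˢ A))
    (hAm : MeasurableSet A) (hFb : ∀ z : Vec m, ∀ a ∈ A, ‖F z a‖ ≤ C) (hC : 0 < C)
    {e : Fin N → Vec m} (he : ∀ j, ‖e j‖ = 1) (heinj : Function.Injective e)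
    (j : Fin N) {ρ : ℝ} (hρ : 0 < ρ) {a : Vec d} (haA : a ∈ A)
    (hloc : LocAdm F (Gbar e) (ρ • e j) a) :
    F (ρ • e j) a ∈ Submodule.span ℝ ({e j} : Set (Vec m)) := by
  obtain ⟨θ, hθ, w, hweq, hwG⟩ := hloc
  set z := ρ • e j with hzdef
  have hw0 : w 0 = z := by
    have := hweq 0 le_rfl
    simpa using this
  have hαA : ∀ t : ℝ, (fun _ : ℝ => a) t ∈ A := fun _ => haA
  obtain ⟨hint, hlip⟩ := trajReg hFc hAm hFb measurable_const hαA hθ.le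
    (fun t ht => hweq t ht.1)
  have hFa : Continuous (fun v : Vec m => F v a) := by
    rw [← continuousOn_univ]
    exact hFc.comp ((continuous_id.prodMk continuous_const).continuousOn)
      (fun v _ => ⟨mem_univ _, haA⟩)
  set g : ℝ → Vec m := fun s => F (w s) a with hgdef
  have hwcont : ContinuousOn w (Icc 0 θ) := lipschitzOnIcc hC.le hlip
  have hgc : ContinuousOn g (Icc 0 θ) := hFa.comp_continuousOn hwcont
  obtain ⟨r, hr, hball⟩ := gbar_localSpan he heinj j hρ
  set sp := Submodule.span ℝ ({e j} : Set (Vec m)) with hspdef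
  have hmin : 0 < min θ (r / (2 * C)) := lt_min hθ (by positivity)
  have hmemIoc : ∀ h ∈ Ioc (0:ℝ) (min θ (r / (2 * C))), (h⁻¹ • (w h - z)) ∈ sp := by
    intro h hh
    have hh0 : 0 < h := hh.1
    have hhθ : h ≤ θ := le_trans hh.2 (min_le_left _ _)
    have hwmem : w h ∈ Gbar e := hwG h ⟨hh0.le, hhθ⟩
    have hlipb : ‖w h - z‖ ≤ C * h := by
      have := hlip 0 ⟨le_rfl, hθ.le⟩ h ⟨hh0.le, hhθ⟩ hh0.le
      rwa [hw0, sub_zero] at this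
    have hlt : ‖w h - z‖ < r := by
      have h2 : h ≤ r / (2 * C) := le_trans hh.2 (min_le_right _ _)
      have hCr : C * (r / (2 * C)) = r / 2 := by
        field_simp
      have := mul_le_mul_of_nonneg_left h2 hC.le
      nlinarith
    have hsp1 : w h ∈ sp := hball _ hwmem hlt
    have hsp2 : z ∈ sp := Submodule.smul_mem _ ρ (Submodule.mem_span_singleton_self _)
    exact Submodule.smul_mem _ _ (Submodule.sub_mem _ hsp1 hsp2)
  have htend : Tendsto (fun h : ℝ => h⁻¹ • (w h - z)) (𝓝[>] (0:ℝ)) (𝓝 (F z a)) := by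
    rw [Metric.tendsto_nhdsWithin_nhds]
    intro ε hε
    have hgc0 : ContinuousWithinAt g (Icc 0 θ) 0 := hgc.continuousWithinAt
      (left_mem_Icc.2 hθ.le)
    rw [Metric.continuousWithinAt_iff] at hgc0
    obtain ⟨δ, hδ, hδ'⟩ := hgc0 (ε/2) (half_pos hε)
    refine ⟨min θ δ, lt_min hθ hδ, ?_⟩
    intro h hh hdist
    have hh0 : 0 < h := hh
    rw [Real.dist_eq, sub_zero, abs_of_pos hh0] at hdist
    have hhθ : h ≤ θ := le_of_lt (lt_of_lt_of_le hdist (min_le_left _ _))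
    have hhδ : h < δ := lt_of_lt_of_le hdist (min_le_right _ _)
    have hieq : w h - z = ∫ s in (0:ℝ)..h, g s := by
      rw [hweq h hh0.le, add_sub_cancel_left]
    have hdiff : (h⁻¹ • (w h - z)) - g 0 = h⁻¹ • (∫ s in (0:ℝ)..h, (g s - g 0)) := by
      have h1 : (∫ s in (0:ℝ)..h, (g s - g 0)) = (w h - z) - h • g 0 := by
        rw [intervalIntegral.integral_sub (hint h ⟨hh0.le, hhθ⟩) intervalIntegrable_const,
          intervalIntegral.integral_const, ← hieq, sub_zero]
      have h2 : h⁻¹ • ((w h - z) - h • g 0) = h⁻¹ • (w h - z) - (h⁻¹ * h) • g 0 := by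
        rw [smul_sub, smul_smul]
      rw [h1, h2, inv_mul_cancel₀ hh0.ne', one_smul]
    have hbnd : ∀ s ∈ Set.uIoc (0:ℝ) h, ‖g s - g 0‖ ≤ ε/2 := by
      intro s hs
      rw [Set.uIoc_of_le hh0.le] at hs
      have hsI : s ∈ Icc 0 θ := ⟨hs.1.le, le_trans hs.2 hhθ⟩
      have hds : dist s 0 < δ := by
        rw [Real.dist_eq, sub_zero, abs_of_nonneg hs.1.le]
        exact lt_of_le_of_lt hs.2 hhδ
      have := hδ' hsI hds
      rw [dist_eq_norm] at this
      exact this.le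
    have hg0 : g 0 = F z a := by rw [hgdef]; simp only []; rw [hw0]
    calc dist (h⁻¹ • (w h - z)) (F z a)
        = ‖(h⁻¹ • (w h - z)) - g 0‖ := by rw [dist_eq_norm, hg0]
      _ = ‖h⁻¹ • (∫ s in (0:ℝ)..h, (g s - g 0))‖ := by rw [hdiff]
      _ ≤ |h⁻¹| * (ε/2 * |h - 0|) := by
          rw [norm_smul, Real.norm_eq_abs]
          exact mul_le_mul_of_nonneg_left
            (intervalIntegral.norm_integral_le_of_norm_le_const hbnd) (abs_nonneg _)
      _ = ε/2 := by
          rw [sub_zero, abs_of_pos hh0, abs_of_pos (inv_pos.2 hh0)]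
          field_simp
      _ < ε := half_lt_self hε
  have hfin : ∀ᶠ h in 𝓝[>] (0:ℝ), h⁻¹ • (w h - z) ∈ (sp : Set (Vec m)) := by
    filter_upwards [Ioc_mem_nhdsGT_of_mem (left_mem_Ico.2 hmin)] with h hh
    exact hmemIoc h hh
  exact (Submodule.closed_of_finiteDimensional sp).mem_of_tendsto htend hfin


lemma locAdmSet_nonempty {m d N : ℕ}
    {F : Vec m → Vec d → Vec m} {A : Set (Vec d)}
    {e : Fin N → Vec m}
    {Asets : Fin N → Set (Vec d)}
    (hne : ∀ j, (Asets j).Nonempty)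
    (hJ : ∀ (j : Fin N), ∀ x ∈ Jbranch e j, LocAdmSet F A (Gbar e) x = Asets j)
    (h0 : LocAdmSet F A (Gbar e) 0
      = ⋃ j, {a ∈ Asets j | ∃ r : ℝ, 0 ≤ r ∧ F 0 a = r • e j})
    (hE : ∀ j, LocAdmSet F A (Gbar e) (e j)
        = {a ∈ Asets j | ⟪F (e j) a, e j⟫ ≤ 0} ∧
        ({a ∈ Asets j | ⟪F (e j) a, e j⟫ ≤ 0} : Set (Vec d)).Nonempty)
    (hzero : ∃ j : Fin N, ∃ a ∈ Asets j, ∃ r : ℝ, 0 ≤ r ∧ F 0 a = r • e j) :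
    ∀ z ∈ Gbar e, ∃ a, a ∈ A ∧ LocAdm F (Gbar e) z a := by
  intro z hz
  rw [Gbar, mem_iUnion] at hz
  obtain ⟨j, s, hs, hsz⟩ := hz
  rcases eq_or_lt_of_le hs.1 with h0s | h0s
  · -- s = 0, z = 0
    have hz0 : z = 0 := by rw [← hsz, ← h0s]; simp
    obtain ⟨j', a, ha, r, hr, hF⟩ := hzero
    have : a ∈ LocAdmSet F A (Gbar e) 0 := by
      rw [h0, mem_iUnion]
      exact ⟨j', ha, r, hr, hF⟩
    rw [LocAdmSet, Set.mem_setOf_eq] at this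
    exact ⟨a, by rwa [hz0]⟩
  rcases eq_or_lt_of_le hs.2 with h1s | h1s
  · -- s = 1, z = e j
    have hze : z = e j := by rw [← hsz, h1s]; simp
    obtain ⟨a, ha⟩ := (hE j).2
    have : a ∈ LocAdmSet F A (Gbar e) (e j) := by rw [(hE j).1]; exact ha
    rw [LocAdmSet, Set.mem_setOf_eq] at this
    exact ⟨a, by rwa [hze]⟩
  · -- interior
    have hmem : z ∈ Jbranch e j := ⟨s, ⟨h0s, h1s⟩, hsz⟩
    obtain ⟨a, ha⟩ := hne j
    have : a ∈ LocAdmSet F A (Gbar e) z := by rw [hJ j z hmem]; exact ha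
    rw [LocAdmSet, Set.mem_setOf_eq] at this
    exact ⟨a, this⟩

lemma glueSeq {m d : ℕ} {A : Set (Vec d)}
    (Tseq : ℕ → ℝ) (αseq : ℕ → ℝ → Vec d) (yseq : ℕ → ℝ → Vec m)
    (hmeas : ∀ n, Measurable (αseq n)) (hA : ∀ n t, αseq n t ∈ A)
    (hcons : ∀ n k, n ≤ k → ∀ t ∈ Icc (0:ℝ) (Tseq n),
      αseq k t = αseq n t ∧ yseq k t = yseq n t)
    (zlim : Vec m) :
    ∃ (α : ℝ → Vec d) (y : ℝ → Vec m), Measurable α ∧ (∀ t, α t ∈ A) ∧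
      (∀ n, ∀ t ∈ Icc (0:ℝ) (Tseq n), α t = αseq n t ∧ y t = yseq n t) ∧
      (∀ t, (∀ n, Tseq n < t) → y t = zlim) := by
  classical
  have htot : ∀ t : ℝ, ∃ n, (t ≤ Tseq n ∨ (∀ k, Tseq k < t)) := by
    intro t
    by_cases h : ∃ n, t ≤ Tseq n
    · obtain ⟨n, hn⟩ := h
      exact ⟨n, Or.inl hn⟩
    · push_neg at h
      exact ⟨0, Or.inr h⟩
  have hkey : ∀ n, ∀ t ∈ Icc (0:ℝ) (Tseq n), ∀ k, t ≤ Tseq k →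
      (αseq k t = αseq n t ∧ yseq k t = yseq n t) := by
    intro n t ht k hk
    rcases le_total n k with h | h
    · exact hcons n k h t ht
    · obtain ⟨h1, h2⟩ := hcons k n h t ⟨ht.1, hk⟩
      exact ⟨h1.symm, h2.symm⟩
  refine ⟨fun t => αseq (Nat.find (htot t)) t,
    fun t => if h : ∃ n, t ≤ Tseq n then yseq (Nat.find h) t else zlim,
    ?_, fun t => hA _ _, ?_, ?_⟩
  · apply Measurable.find (fun n => hmeas n) ?_ htot
    intro n
    have hset : {t : ℝ | t ≤ Tseq n ∨ (∀ k, Tseq k < t)}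
        = Iic (Tseq n) ∪ (⋂ k, Ioi (Tseq k)) := by
      ext t
      simp [mem_Iic, mem_Ioi]
    rw [hset]
    exact measurableSet_Iic.union (MeasurableSet.iInter (fun k => measurableSet_Ioi))
  · intro n t ht
    constructor
    · rcases Nat.find_spec (htot t) with hle | hgt
      · exact (hkey n t ht _ hle).1
      · exact absurd ht.2 (not_le.2 (hgt n))
    · have hex : ∃ k, t ≤ Tseq k := ⟨n, ht.2⟩
      simp only [dif_pos hex]
      exact (hkey n t ht _ (Nat.find_spec hex)).2
  · intro t hgt
    have hnex : ¬ ∃ n, t ≤ Tseq n := by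
      push_neg
      exact fun n => hgt n
    simp only [dif_neg hnex]


/-- A partial admissible solution up to time `p.1`. -/
def SolP {m d : ℕ} (F : Vec m → Vec d → Vec m) (A : Set (Vec d)) (G : Set (Vec m))
    (x : Vec m) (p : ℝ × (ℝ → Vec d) × (ℝ → Vec m)) : Prop :=
  0 ≤ p.1 ∧ Measurable p.2.1 ∧ (∀ t, p.2.1 t ∈ A) ∧
    (∀ t ∈ Icc (0:ℝ) p.1, p.2.2 t = x + ∫ s in (0:ℝ)..t, F (p.2.2 s) (p.2.1 s)) ∧
    (∀ t ∈ Icc (0:ℝ) p.1, p.2.2 t ∈ G)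

/-- Extension order on partial solutions. -/
def extR {m d : ℕ} (F : Vec m → Vec d → Vec m) (A : Set (Vec d)) (G : Set (Vec m))
    (x : Vec m) (p q : {p : ℝ × (ℝ → Vec d) × (ℝ → Vec m) // SolP F A G x p}) : Prop :=
  p.1.1 ≤ q.1.1 ∧ ∀ t ∈ Icc (0:ℝ) p.1.1, q.1.2.1 t = p.1.2.1 t ∧ q.1.2.2 t = p.1.2.2 t

lemma extR_refl {m d : ℕ} {F : Vec m → Vec d → Vec m} {A : Set (Vec d)} {G : Set (Vec m)}
    {x : Vec m} (p : {p : ℝ × (ℝ → Vec d) × (ℝ → Vec m) // SolP F A G x p}) :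
    extR F A G x p p := ⟨le_rfl, fun _ _ => ⟨rfl, rfl⟩⟩

lemma extR_trans {m d : ℕ} {F : Vec m → Vec d → Vec m} {A : Set (Vec d)} {G : Set (Vec m)}
    {x : Vec m} {p q u : {p : ℝ × (ℝ → Vec d) × (ℝ → Vec m) // SolP F A G x p}}
    (h1 : extR F A G x p q) (h2 : extR F A G x q u) : extR F A G x p u := by
  refine ⟨le_trans h1.1 h2.1, fun t ht => ?_⟩
  have ht2 : t ∈ Icc (0:ℝ) q.1.1 := ⟨ht.1, le_trans ht.2 h1.1⟩
  obtain ⟨ha1, hy1⟩ := h1.2 t ht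
  obtain ⟨ha2, hy2⟩ := h2.2 t ht2
  exact ⟨ha2.trans ha1, hy2.trans hy1⟩

/-- Monotone selection from a chain. -/
lemma chain_monotonize {m d : ℕ} {F : Vec m → Vec d → Vec m} {A : Set (Vec d)}
    {G : Set (Vec m)} {x : Vec m}
    {c : Set {p : ℝ × (ℝ → Vec d) × (ℝ → Vec m) // SolP F A G x p}}
    (hc : IsChain (extR F A G x) c)
    (ps : ℕ → {p : ℝ × (ℝ → Vec d) × (ℝ → Vec m) // SolP F A G x p})
    (hps : ∀ n, ps n ∈ c) :
    ∃ qs : ℕ → {p : ℝ × (ℝ → Vec d) × (ℝ → Vec m) // SolP F A G x p},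
      (∀ n, qs n ∈ c) ∧ (∀ n k, n ≤ k → extR F A G x (qs n) (qs k)) ∧
      (∀ n, (ps n).1.1 ≤ (qs n).1.1) := by
  classical
  have hcomp : ∀ p ∈ c, ∀ q ∈ c, extR F A G x p q ∨ extR F A G x q p := by
    intro p hp q hq
    rcases eq_or_ne p q with rfl | hne
    · exact Or.inl (extR_refl p)
    · exact hc hp hq hne
  let qs : ℕ → {p : ℝ × (ℝ → Vec d) × (ℝ → Vec m) // SolP F A G x p} :=
    fun n => Nat.rec (ps 0)
      (fun k q => if extR F A G x q (ps (k+1)) then ps (k+1) else q) n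
  have hqsc : ∀ n, qs n ∈ c := by
    intro n
    induction n with
    | zero => exact hps 0
    | succ k ih =>
      show (if extR F A G x (qs k) (ps (k+1)) then ps (k+1) else qs k) ∈ c
      by_cases h : extR F A G x (qs k) (ps (k+1))
      · rw [if_pos h]; exact hps _
      · rw [if_neg h]; exact ih
  have hstep : ∀ k, extR F A G x (qs k) (qs (k+1)) := by
    intro k
    show extR F A G x (qs k) (if extR F A G x (qs k) (ps (k+1)) then ps (k+1) else qs k)
    by_cases h : extR F A G x (qs k) (ps (k+1))
    · rw [if_pos h]; exact h
    · rw [if_neg h]; exact extR_refl _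
  have hge : ∀ n, (ps n).1.1 ≤ (qs n).1.1 := by
    intro n
    cases n with
    | zero => exact le_rfl
    | succ k =>
      show (ps (k+1)).1.1 ≤ (if extR F A G x (qs k) (ps (k+1)) then ps (k+1) else qs k).1.1
      by_cases h : extR F A G x (qs k) (ps (k+1))
      · rw [if_pos h]
      · rw [if_neg h]
        rcases hcomp (ps (k+1)) (hps _) (qs k) (hqsc k) with h' | h'
        · exact h'.1
        · exact absurd h' h
  refine ⟨qs, hqsc, ?_, hge⟩
  intro n k hnk
  induction hnk with
  | refl => exact extR_refl _
  | step h ih =>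
    exact extR_trans ih (hstep _)

/-- Gluing a monotone sequence of partial solutions. -/
lemma glueChain {m d : ℕ} {F : Vec m → Vec d → Vec m} {A : Set (Vec d)}
    {G : Set (Vec m)} {x : Vec m}
    (qs : ℕ → {p : ℝ × (ℝ → Vec d) × (ℝ → Vec m) // SolP F A G x p})
    (hmono : ∀ n k, n ≤ k → extR F A G x (qs n) (qs k)) (zl : Vec m) :
    ∃ (αg : ℝ → Vec d) (yg : ℝ → Vec m), Measurable αg ∧ (∀ t, αg t ∈ A) ∧
      (∀ n, ∀ t ∈ Icc (0:ℝ) (qs n).1.1, αg t = (qs n).1.2.1 t ∧ yg t = (qs n).1.2.2 t) ∧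
      (∀ t, (∀ n, (qs n).1.1 < t) → yg t = zl) ∧
      (∀ t, 0 ≤ t → (∃ n, t ≤ (qs n).1.1) →
        (yg t = x + ∫ s in (0:ℝ)..t, F (yg s) (αg s) ∧ yg t ∈ G)) := by
  obtain ⟨αg, yg, h1, h2, h3, h4⟩ := glueSeq (fun n => (qs n).1.1) (fun n => (qs n).1.2.1)
    (fun n => (qs n).1.2.2) (fun n => (qs n).2.2.1) (fun n t => (qs n).2.2.2.1 t)
    (fun n k h t ht => (hmono n k h).2 t ht) zl
  refine ⟨αg, yg, h1, h2, h3, h4, ?_⟩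
  rintro t ht0 ⟨n, hn⟩
  have hIcc : t ∈ Icc (0:ℝ) (qs n).1.1 := ⟨ht0, hn⟩
  have hag := h3 n t hIcc
  constructor
  · rw [hag.2, (qs n).2.2.2.2.1 t hIcc]
    congr 1
    apply intervalIntegral.integral_congr
    intro s hs
    rw [uIcc_of_le ht0] at hs
    have hsI : s ∈ Icc (0:ℝ) (qs n).1.1 := ⟨hs.1, le_trans hs.2 hn⟩
    obtain ⟨ha', hy'⟩ := h3 n s hsI
    show F ((qs n).1.2.2 s) ((qs n).1.2.1 s) = F (yg s) (αg s)
    rw [ha', hy']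
  · rw [hag.2]
    exact (qs n).2.2.2.2.2 t hIcc


/-- Every chain of partial solutions is bounded, unless a global solution exists. -/
lemma chainBound {m d : ℕ} {F : Vec m → Vec d → Vec m} {A : Set (Vec d)} {C : ℝ}
    {G : Set (Vec m)} {x : Vec m}
    (hFc : ContinuousOn (fun p : Vec m × Vec d => F p.1 p.2) (univ ×ˢ A))
    (hAm : MeasurableSet A) (hFb : ∀ z : Vec m, ∀ a ∈ A, ‖F z a‖ ≤ C)
    (hGcl : IsClosed G) (hxG : x ∈ G) {a₀ : Vec d} (ha₀ : a₀ ∈ A)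
    (c : Set {p : ℝ × (ℝ → Vec d) × (ℝ → Vec m) // SolP F A G x p})
    (hc : IsChain (extR F A G x) c) :
    (∃ (α : ℝ → Vec d) (y : ℝ → Vec m), Measurable α ∧ (∀ t, α t ∈ A) ∧
      (∀ t : ℝ, 0 ≤ t → y t = x + ∫ s in (0:ℝ)..t, F (y s) (α s)) ∧
      (∀ t : ℝ, 0 ≤ t → y t ∈ G)) ∨
    (∃ ub, ∀ p ∈ c, extR F A G x p ub) := by
  classical
  have hreg := fun (p : {p : ℝ × (ℝ → Vec d) × (ℝ → Vec m) // SolP F A G x p}) =>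
    trajReg hFc hAm hFb p.2.2.1 p.2.2.2.1 p.2.1 p.2.2.2.2.1
  rcases eq_empty_or_nonempty c with rfl | ⟨p₀, hp₀⟩
  · right
    refine ⟨⟨(0, fun _ => a₀, fun _ => x), le_rfl, measurable_const, fun _ => ha₀, ?_, ?_⟩,
      fun p hp => absurd hp (notMem_empty p)⟩
    · intro t ht
      have ht0 : t = 0 := le_antisymm ht.2 ht.1
      subst ht0
      simp
    · intro t _
      exact hxG
  have hcomp : ∀ p ∈ c, ∀ q ∈ c, extR F A G x p q ∨ extR F A G x q p := by
    intro p hp q hq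
    rcases eq_or_ne p q with rfl | hne
    · exact Or.inl (extR_refl p)
    · exact hc hp hq hne
  by_cases hbdd : BddAbove ((fun p : {p : ℝ × (ℝ → Vec d) × (ℝ → Vec m) // SolP F A G x p}
      => p.1.1) '' c)
  · -- bounded chain
    set Tstar := sSup ((fun p : {p : ℝ × (ℝ → Vec d) × (ℝ → Vec m) // SolP F A G x p}
      => p.1.1) '' c) with hTstardef
    by_cases hatt : ∃ p ∈ c, p.1.1 = Tstar
    · obtain ⟨pm, hpm, hTm⟩ := hatt
      right
      refine ⟨pm, fun q hq => ?_⟩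
      rcases hcomp q hq pm hpm with h | h
      · exact h
      · have h1 : q.1.1 ≤ Tstar := le_csSup hbdd ⟨q, hq, rfl⟩
        have h2 : q.1.1 = pm.1.1 := le_antisymm (hTm ▸ h1) h.1
        refine ⟨h2.le, fun t ht => ?_⟩
        obtain ⟨ha', hy'⟩ := h.2 t (by rw [← h2]; exact ht)
        exact ⟨ha'.symm, hy'.symm⟩
    · push_neg at hatt
      have himagene : ((fun p : {p : ℝ × (ℝ → Vec d) × (ℝ → Vec m) // SolP F A G x p}
          => p.1.1) '' c).Nonempty := ⟨_, ⟨p₀, hp₀, rfl⟩⟩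
      have hlt : ∀ p ∈ c, p.1.1 < Tstar := fun p hp =>
        lt_of_le_of_ne (le_csSup hbdd ⟨p, hp, rfl⟩) (hatt p hp)
      have hpick : ∀ n : ℕ, ∃ p ∈ c, Tstar - 1/(n+1) < p.1.1 := by
        intro n
        have h1 : Tstar - 1/((n:ℝ)+1) < Tstar := by
          have : (0:ℝ) < 1/((n:ℝ)+1) := by positivity
          linarith
        obtain ⟨v, hv, hv'⟩ := exists_lt_of_lt_csSup himagene h1
        obtain ⟨p, hp, rfl⟩ := hv
        exact ⟨p, hp, hv'⟩
      choose ps hpsc hpsT using hpick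
      obtain ⟨qs, hqsc, hqsmono, hqsge⟩ := chain_monotonize hc ps hpsc
      set Ts : ℕ → ℝ := fun n => (qs n).1.1 with hTs
      have hTlt : ∀ n, Ts n < Tstar := fun n => hlt _ (hqsc n)
      have hT0 : ∀ n, 0 ≤ Ts n := fun n => (qs n).2.1
      have hTstar0 : 0 ≤ Tstar := le_trans (hT0 0) (hTlt 0).le
      have hTtend : Tendsto Ts atTop (𝓝 Tstar) := by
        apply tendsto_of_tendsto_of_tendsto_of_le_of_le
          (g := fun n : ℕ => Tstar - 1/((n:ℝ)+1)) (h := fun _ : ℕ => Tstar)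
        · have h2 : Tendsto (fun n : ℕ => 1/((n:ℝ)+1)) atTop (𝓝 0) :=
            tendsto_one_div_add_atTop_nhds_zero_nat
          have := tendsto_const_nhds (x := Tstar) (f := atTop (α := ℕ)) |>.sub h2
          simpa using this
        · exact tendsto_const_nhds
        · exact fun n => le_of_lt (lt_of_lt_of_le (hpsT n) (hqsge n))
        · exact fun n => (hTlt n).le
      have hbelow : ∀ t : ℝ, t < Tstar → ∃ n, t ≤ Ts n := by
        intro t htT
        obtain ⟨n, hn⟩ := (hTtend.eventually (eventually_gt_nhds htT)).exists
        exact ⟨n, hn.le⟩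
      -- Cauchy sequence of endpoints
      have hcauchy : CauchySeq (fun n => (qs n).1.2.2 (Ts n)) := by
        apply cauchySeq_of_le_tendsto_0 (b := fun n => C * (Tstar - Ts n))
        · have haux : ∀ a b N : ℕ, N ≤ a → N ≤ b → a ≤ b →
              dist ((qs a).1.2.2 (Ts a)) ((qs b).1.2.2 (Ts b)) ≤ C * (Tstar - Ts N) := by
            intro a b N hNa hNb hab
            have hmab := hqsmono a b hab
            have h1 := (hmab.2 (Ts a) ⟨hT0 a, le_rfl⟩).2
            have h2 : ‖(qs b).1.2.2 (Ts b) - (qs b).1.2.2 (Ts a)‖ ≤ C * (Ts b - Ts a) :=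
              (hreg (qs b)).2 (Ts a) ⟨hT0 a, hmab.1⟩ (Ts b) ⟨hT0 b, le_rfl⟩ hmab.1
            have h3 : Ts N ≤ Ts a := (hqsmono N a hNa).1
            rw [dist_eq_norm, ← h1, norm_sub_rev]
            calc ‖(qs b).1.2.2 (Ts b) - (qs b).1.2.2 (Ts a)‖ ≤ C * (Ts b - Ts a) := h2
              _ ≤ C * (Tstar - Ts N) := by
                  have hC0 : 0 ≤ C := le_trans (norm_nonneg _) (hFb x _ ha₀)
                  have := (hTlt b).le
                  nlinarith
          intro n k N hn hk
          rcases le_total n k with h | h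
          · exact haux n k N hn hk h
          · rw [dist_comm]
            exact haux k n N hk hn h
        · have h1 : Tendsto (fun n => Tstar - Ts n) atTop (𝓝 0) := by
            have := (tendsto_const_nhds (x := Tstar) (f := atTop (α := ℕ))).sub hTtend
            simpa using this
          have := h1.const_mul C
          simpa using this
      obtain ⟨zl, hzl⟩ := cauchySeq_tendsto_of_complete hcauchy
      obtain ⟨αg, yg, hαgm, hαgA, hagree, hout, hgood⟩ := glueChain qs hqsmono zl
      set gg : ℝ → Vec m := fun s => F (yg s) (αg s) with hgg
      have hggb : ∀ s, ‖gg s‖ ≤ C := fun s => hFb _ _ (hαgA s)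
      have hpiece : ∀ n, AEStronglyMeasurable gg (volume.restrict (Ioc (0:ℝ) (Ts n))) := by
        intro n
        have hii := (hreg (qs n)).1 (Ts n) ⟨hT0 n, le_rfl⟩
        rw [intervalIntegrable_iff_integrableOn_Ioc_of_le (hT0 n)] at hii
        refine hii.1.congr ?_
        refine (ae_restrict_iff' measurableSet_Ioc).2 (Eventually.of_forall ?_)
        intro s hs
        have hsI : s ∈ Icc (0:ℝ) (Ts n) := ⟨hs.1.le, hs.2⟩
        obtain ⟨ha', hy'⟩ := hagree n s hsI
        show F ((qs n).1.2.2 s) ((qs n).1.2.1 s) = gg s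
        rw [hgg]
        show F ((qs n).1.2.2 s) ((qs n).1.2.1 s) = F (yg s) (αg s)
        rw [ha', hy']
      have hintg : IntervalIntegrable gg volume 0 Tstar := by
        rw [intervalIntegrable_iff_integrableOn_Ioc_of_le hTstar0]
        have hsubU : Ioc (0:ℝ) Tstar ⊆ (⋃ n, Ioc (0:ℝ) (Ts n)) ∪ {Tstar} := by
          intro s hs
          rcases lt_or_eq_of_le hs.2 with h | h
          · obtain ⟨n, hn⟩ := hbelow s h
            exact Or.inl (mem_iUnion.2 ⟨n, hs.1, hn⟩)
          · exact Or.inr (by simp [h])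
        have hmeasle : volume.restrict (Ioc (0:ℝ) Tstar) ≤
            volume.restrict (⋃ n, Ioc (0:ℝ) (Ts n)) + volume.restrict {Tstar} := by
          refine le_trans (Measure.restrict_mono hsubU le_rfl) ?_
          exact Measure.restrict_union_le _ _
        have hsing : AEStronglyMeasurable gg (volume.restrict ({Tstar} : Set ℝ)) := by
          have hz : volume.restrict ({Tstar} : Set ℝ) = 0 := by
            rw [Measure.restrict_eq_zero]
            exact measure_singleton _
          rw [hz]
          exact aestronglyMeasurable_zero_measure gg
        have hUn : AEStronglyMeasurable gg (volume.restrict (⋃ n, Ioc (0:ℝ) (Ts n))) :=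
          aestronglyMeasurable_iUnion_iff.2 hpiece
        have hca : AEStronglyMeasurable gg (volume.restrict (Ioc (0:ℝ) Tstar)) :=
          (hUn.add_measure hsing).mono_measure hmeasle
        exact Integrable.mono' (integrable_const C) hca (Eventually.of_forall hggb)
      have hinttn : ∀ n, IntervalIntegrable gg volume 0 (Ts n) := by
        intro n
        apply hintg.mono_set
        rw [uIcc_of_le (hT0 n), uIcc_of_le hTstar0]
        exact Icc_subset_Icc le_rfl (hTlt n).le
      have hintr : ∀ n, IntervalIntegrable gg volume (Ts n) Tstar := by
        intro n
        apply hintg.mono_set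
        rw [uIcc_of_le (hTlt n).le, uIcc_of_le hTstar0]
        exact Icc_subset_Icc (hT0 n) le_rfl
      have hIlim : Tendsto (fun n => ∫ s in (0:ℝ)..(Ts n), gg s) atTop
          (𝓝 (∫ s in (0:ℝ)..Tstar, gg s)) := by
        rw [tendsto_iff_dist_tendsto_zero]
        apply squeeze_zero (fun n => dist_nonneg) (g := fun n => C * (Tstar - Ts n))
        · intro n
          have hsplit : ∫ s in (0:ℝ)..Tstar, gg s
              = (∫ s in (0:ℝ)..(Ts n), gg s) + ∫ s in (Ts n)..Tstar, gg s :=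
            (intervalIntegral.integral_add_adjacent_intervals (hinttn n) (hintr n)).symm
          rw [dist_eq_norm, hsplit]
          have : (∫ s in (0:ℝ)..(Ts n), gg s) -
              ((∫ s in (0:ℝ)..(Ts n), gg s) + ∫ s in (Ts n)..Tstar, gg s)
              = -(∫ s in (Ts n)..Tstar, gg s) := by abel
          rw [this, norm_neg]
          calc ‖∫ s in (Ts n)..Tstar, gg s‖ ≤ C * |Tstar - Ts n| :=
              intervalIntegral.norm_integral_le_of_norm_le_const (fun s _ => hggb s)
            _ = C * (Tstar - Ts n) := by rw [abs_of_nonneg (sub_nonneg.2 (hTlt n).le)]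
        · have h1 : Tendsto (fun n => Tstar - Ts n) atTop (𝓝 0) := by
            have := (tendsto_const_nhds (x := Tstar) (f := atTop (α := ℕ))).sub hTtend
            simpa using this
          have := h1.const_mul C
          simpa using this
      have hyTstar : yg Tstar = zl := hout Tstar (fun n => hTlt n)
      have hseqn : ∀ n, (qs n).1.2.2 (Ts n) = x + ∫ s in (0:ℝ)..(Ts n), gg s := by
        intro n
        have hIcc : Ts n ∈ Icc (0:ℝ) (Ts n) := ⟨hT0 n, le_rfl⟩
        obtain ⟨heq', hmem'⟩ := hgood (Ts n) (hT0 n) ⟨n, le_rfl⟩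
        rw [← (hagree n (Ts n) hIcc).2, heq']
      have heqTstar : yg Tstar = x + ∫ s in (0:ℝ)..Tstar, gg s := by
        have h2 : Tendsto (fun n => (qs n).1.2.2 (Ts n)) atTop
            (𝓝 (x + ∫ s in (0:ℝ)..Tstar, gg s)) := by
          have := tendsto_const_nhds (x := x) (f := atTop (α := ℕ)) |>.add hIlim
          exact this.congr (fun n => (hseqn n).symm)
        rw [hyTstar]
        exact tendsto_nhds_unique hzl h2
      have hmemTstar : yg Tstar ∈ G := by
        rw [hyTstar]
        apply hGcl.mem_of_tendsto hzl
        exact Eventually.of_forall (fun n => (qs n).2.2.2.2.2 (Ts n) ⟨hT0 n, le_rfl⟩)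
      right
      refine ⟨⟨(Tstar, αg, yg), hTstar0, hαgm, hαgA, ?_, ?_⟩, ?_⟩
      · intro t ht
        rcases lt_or_eq_of_le ht.2 with hLt | hEq
        · exact (hgood t ht.1 (hbelow t hLt)).1
        · rw [hEq]
          exact heqTstar
      · intro t ht
        rcases lt_or_eq_of_le ht.2 with hLt | hEq
        · exact (hgood t ht.1 (hbelow t hLt)).2
        · rw [hEq]
          exact hmemTstar
      · intro p hp
        refine ⟨le_csSup hbdd ⟨p, hp, rfl⟩, ?_⟩
        intro t ht
        have htlt : t < Tstar := lt_of_le_of_lt ht.2 (hlt p hp)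
        obtain ⟨n, hn⟩ := hbelow t htlt
        have hag := hagree n t ⟨ht.1, hn⟩
        rcases hcomp p hp (qs n) (hqsc n) with h | h
        · obtain ⟨ha', hy'⟩ := h.2 t ht
          exact ⟨hag.1.trans ha', hag.2.trans hy'⟩
        · obtain ⟨ha', hy'⟩ := h.2 t ⟨ht.1, hn⟩
          exact ⟨hag.1.trans ha'.symm, hag.2.trans hy'.symm⟩
  · -- unbounded chain: produce a global solution
    left
    have hpick : ∀ n : ℕ, ∃ p ∈ c, (n : ℝ) ≤ p.1.1 := by
      intro n
      by_contra h
      push_neg at h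
      apply hbdd
      refine ⟨(n : ℝ), ?_⟩
      rintro v ⟨p, hp, rfl⟩
      exact (h p hp).le
    choose ps hpsc hpsT using hpick
    obtain ⟨qs, hqsc, hqsmono, hqsge⟩ := chain_monotonize hc ps hpsc
    obtain ⟨αg, yg, hαgm, hαgA, hagree, hout, hgood⟩ := glueChain qs hqsmono x
    refine ⟨αg, yg, hαgm, hαgA, ?_, ?_⟩
    · intro t ht0
      obtain ⟨n, hn⟩ := exists_nat_ge t
      exact (hgood t ht0 ⟨n, le_trans hn (le_trans (hpsT n) (hqsge n))⟩).1
    · intro t ht0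
      obtain ⟨n, hn⟩ := exists_nat_ge t
      exact (hgood t ht0 ⟨n, le_trans hn (le_trans (hpsT n) (hqsge n))⟩).2


/-- Any partial solution can be strictly extended, using local admissibility. -/
lemma extendMax {m d : ℕ} {F : Vec m → Vec d → Vec m} {A : Set (Vec d)} {C : ℝ}
    {G : Set (Vec m)} {x : Vec m}
    (hFc : ContinuousOn (fun p : Vec m × Vec d => F p.1 p.2) (univ ×ˢ A))
    (hAm : MeasurableSet A) (hFb : ∀ z : Vec m, ∀ a ∈ A, ‖F z a‖ ≤ C)
    (hLoc : ∀ z ∈ G, ∃ a, a ∈ A ∧ LocAdm F G z a)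
    (p : {p : ℝ × (ℝ → Vec d) × (ℝ → Vec m) // SolP F A G x p}) :
    ∃ q, extR F A G x p q ∧ p.1.1 < q.1.1 := by
  classical
  obtain ⟨⟨T, α, y⟩, hT0, hαm, hαA, heq, hmemG⟩ := p
  dsimp only at hT0 hαm hαA heq hmemG
  have hz : y T ∈ G := hmemG T ⟨hT0, le_rfl⟩
  obtain ⟨a, haA, θ, hθ, w, hweq, hwG⟩ := hLoc (y T) hz
  obtain ⟨hwint, hwlip⟩ := trajReg hFc hAm hFb measurable_const
    (fun _ : ℝ => haA) hθ.le (fun t ht => hweq t ht.1)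
  obtain ⟨hint, hlip⟩ := trajReg hFc hAm hFb hαm hαA hT0 heq
  set αq : ℝ → Vec d := fun t => if t ≤ T then α t else a with hαq
  set yq : ℝ → Vec m := fun t => if t ≤ T then y t else w (t - T) with hyq
  have hαqv : ∀ s, s ≤ T → (αq s = α s ∧ yq s = y s) :=
    fun s hs => ⟨if_pos hs, if_pos hs⟩
  have hαqv' : ∀ s, ¬ (s ≤ T) → (αq s = a ∧ yq s = w (s - T)) :=
    fun s hs => ⟨if_neg hs, if_neg hs⟩
  have hSol : SolP F A G x (T + θ, αq, yq) := by
    refine ⟨show (0:ℝ) ≤ T + θ by linarith, ?_, ?_, ?_, ?_⟩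
    · exact Measurable.ite measurableSet_Iic hαm measurable_const
    · intro t
      show αq t ∈ A
      by_cases h : t ≤ T
      · rw [(hαqv t h).1]; exact hαA t
      · rw [(hαqv' t h).1]; exact haA
    · intro t htp
      have ht : t ∈ Icc (0:ℝ) (T + θ) := htp
      show yq t = x + ∫ s in (0:ℝ)..t, F (yq s) (αq s)
      by_cases hcase : t ≤ T
      · rw [(hαqv t hcase).2, heq t ⟨ht.1, hcase⟩]
        congr 1
        apply intervalIntegral.integral_congr
        intro s hs
        rw [uIcc_of_le ht.1] at hs
        have hsT : s ≤ T := le_trans hs.2 hcase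
        show F (y s) (α s) = F (yq s) (αq s)
        rw [(hαqv s hsT).1, (hαqv s hsT).2]
      · have hTt : T < t := not_le.1 hcase
        have ht1 : 0 ≤ t - T := by linarith
        have ht2 : t - T ≤ θ := by linarith [ht.2]
        have hEq1 : EqOn (fun s => F (y s) (α s)) (fun s => F (yq s) (αq s))
            (Icc (0:ℝ) T) := by
          intro s hs
          show F (y s) (α s) = F (yq s) (αq s)
          rw [(hαqv s hs.2).1, (hαqv s hs.2).2]
        have hI1 : IntervalIntegrable (fun s => F (yq s) (αq s)) volume 0 T := by
          have h0 := hint T ⟨hT0, le_rfl⟩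
          rw [intervalIntegrable_iff_integrableOn_Ioc_of_le hT0] at h0 ⊢
          exact h0.congr_fun (hEq1.mono Ioc_subset_Icc_self) measurableSet_Ioc
        have hI2base : IntervalIntegrable (fun u => F (w u) a) volume 0 (t - T) :=
          hwint (t - T) ⟨ht1, ht2⟩
        have hI2shift := hI2base.comp_sub_right T
        rw [zero_add, sub_add_cancel] at hI2shift
        have hEq2 : EqOn (fun s => F (w (s - T)) a) (fun s => F (yq s) (αq s))
            (Ioc T t) := by
          intro s hs
          show F (w (s - T)) a = F (yq s) (αq s)
          rw [(hαqv' s (not_le.2 hs.1)).1, (hαqv' s (not_le.2 hs.1)).2]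
        have hI2 : IntervalIntegrable (fun s => F (yq s) (αq s)) volume T t := by
          rw [intervalIntegrable_iff_integrableOn_Ioc_of_le hTt.le] at hI2shift ⊢
          exact hI2shift.congr_fun hEq2 measurableSet_Ioc
        rw [(hαqv' t hcase).2]
        rw [← intervalIntegral.integral_add_adjacent_intervals hI1 hI2]
        have hv1 : ∫ s in (0:ℝ)..T, F (yq s) (αq s) = y T - x := by
          have hcg := intervalIntegral.integral_congr (a := (0:ℝ)) (b := T)
            (μ := volume) (by rw [uIcc_of_le hT0]; exact hEq1)
          rw [← hcg, heq T ⟨hT0, le_rfl⟩]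
          simp
        have hv2 : ∫ s in T..t, F (yq s) (αq s) = w (t - T) - y T := by
          have hcg : ∫ s in T..t, F (yq s) (αq s) = ∫ s in T..t, F (w (s - T)) a := by
            apply intervalIntegral.integral_congr_ae
            apply Eventually.of_forall
            intro s hs
            rw [Set.uIoc_of_le hTt.le] at hs
            exact (hEq2 hs).symm
          rw [hcg]
          have hcv : ∫ s in T..t, F (w (s - T)) a = ∫ u in (0:ℝ)..(t - T), F (w u) a := by
            have := intervalIntegral.integral_comp_sub_right (a := T) (b := t)
              (fun u => F (w u) a) T
            rw [sub_self] at this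
            exact this
          rw [hcv, hweq (t - T) ht1]
          simp
        rw [hv1, hv2]
        abel
    · intro t htp
      have ht : t ∈ Icc (0:ℝ) (T + θ) := htp
      show yq t ∈ G
      by_cases hcase : t ≤ T
      · rw [(hαqv t hcase).2]
        exact hmemG t ⟨ht.1, hcase⟩
      · have hTt : T < t := not_le.1 hcase
        rw [(hαqv' t hcase).2]
        exact hwG (t - T) ⟨by linarith, by linarith [ht.2]⟩
  refine ⟨⟨(T + θ, αq, yq), hSol⟩, ⟨show T ≤ T + θ by linarith, fun t ht => ?_⟩,
    show T < T + θ by linarith⟩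
  exact ⟨(hαqv t ht.2).1, (hαqv t ht.2).2⟩

/-- Under (A1), (Aa) and (Ab), for every `x ∈ Ḡ` and every mode `γ`
the set `𝒜_{γ,x}` of admissible controls is nonempty: there is a Borel measurable
control with values in `A` whose trajectory starting from `x` stays in `Ḡ` forever. -/
theorem admissible_controls_nonempty
    (m d N : ℕ) (hm : 1 ≤ m) (hd : 1 ≤ d) (hN : 2 ≤ N)
    (E : Type) [Fintype E] [Nonempty E]
    (e : Fin N → Vec m) (he : ∀ j, ‖e j‖ = 1) (heinj : Function.Injective e)
    (A : Set (Vec d)) (hAcomp : IsCompact A)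
    (f : E → Vec m → Vec d → Vec m)
    (C : ℝ) (hC : 0 < C) (hA1 : AssumptionA1 A f C)
    (Asets : E → Fin N → Set (Vec d)) (act : Fin N → Set E)
    (β η κc : ℝ) (hβ : 0 < β) (hη : η ∈ Ioo (0:ℝ) 1) (hκ : κc ∈ Ico (0:ℝ) 1)
    (hAa : AssumptionAa e A f Asets β)
    (hAb : AssumptionAb e f Asets act β η κc) :
    ∀ x ∈ Gbar e, ∀ γ : E, ∃ (α : ℝ → Vec d) (y : ℝ → Vec m),
      AdmPair (f γ) A (Gbar e) x α y := by
  classical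
  intro x hx γ
  by_contra hcon
  obtain ⟨hunif, hosl, hFb⟩ := hA1 γ
  have hFc : ContinuousOn (fun p : Vec m × Vec d => f γ p.1 p.2) (univ ×ˢ A) :=
    hunif.continuousOn
  have hAm : MeasurableSet A := hAcomp.isClosed.measurableSet
  obtain ⟨hAane, hJ, h0, hEe, _⟩ := hAa
  have hsubA : ∀ j, Asets γ j ⊆ A := fun j => (hAane γ j).2
  have hAsne : ∀ j, (Asets γ j).Nonempty := fun j => (hAane γ j).1
  have hNpos : 0 < N := lt_of_lt_of_le two_pos hN
  set j0 : Fin N := ⟨0, hNpos⟩ with hj0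
  obtain ⟨a₀, ha₀As⟩ := hAsne j0
  have ha₀ : a₀ ∈ A := hsubA j0 ha₀As
  have hGcl : IsClosed (Gbar e) := gbar_closed e
  have hzero : ∃ j : Fin N, ∃ a ∈ Asets γ j, ∃ r : ℝ, 0 ≤ r ∧ f γ 0 a = r • e j := by
    by_cases hact : γ ∈ act j0
    · obtain ⟨ap, hap, am, ham, hig, hil⟩ := hAb.1 j0 γ hact
      have hapA : ap ∈ A := hsubA j0 hap
      have hFa : Continuous (fun v : Vec m => f γ v ap) := by
        rw [← continuousOn_univ]
        exact hFc.comp ((continuous_id.prodMk continuous_const).continuousOn)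
          (fun v _ => ⟨mem_univ _, hapA⟩)
      have hsp : f γ 0 ap ∈ Submodule.span ℝ ({e j0} : Set (Vec m)) := by
        have htend : Tendsto (fun ρ : ℝ => f γ (ρ • e j0) ap) (𝓝[>] (0:ℝ))
            (𝓝 (f γ 0 ap)) := by
          have h1 : Tendsto (fun ρ : ℝ => f γ (ρ • e j0) ap) (𝓝 0)
              (𝓝 (f γ ((0:ℝ) • e j0) ap)) :=
            (hFa.comp (continuous_id.smul continuous_const)).tendsto 0
          rw [zero_smul] at h1
          exact h1.mono_left nhdsWithin_le_nhds
        apply (Submodule.closed_of_finiteDimensional _).mem_of_tendsto htend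
        filter_upwards [Ioo_mem_nhdsGT_of_mem (left_mem_Ico.2 one_pos)] with ρ hρ
        have hmem : (ρ • e j0) ∈ Jbranch e j0 := ⟨ρ, hρ, rfl⟩
        have hloc : ap ∈ LocAdmSet (f γ) A (Gbar e) (ρ • e j0) := by
          rw [hJ γ j0 _ hmem]
          exact hap
        rw [LocAdmSet, Set.mem_setOf_eq] at hloc
        exact branch_parallel hFc hAm hFb hC he heinj j0 hρ.1 hapA hloc.2
      obtain ⟨cc, hcc⟩ := Submodule.mem_span_singleton.1 hsp
      have hinner : ⟪f γ 0 ap, e j0⟫ = cc := by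
        rw [← hcc, real_inner_smul_left]
        have h1 : ⟪e j0, e j0⟫ = (1:ℝ) := by
          rw [real_inner_self_eq_norm_mul_norm, he j0, one_mul]
        rw [h1, mul_one]
      rw [hinner] at hig
      exact ⟨j0, ap, hap, cc, by linarith, hcc.symm⟩
    · obtain ⟨_, ⟨a0, ha0, hf0⟩, _⟩ := hAb.2 j0 γ hact
      exact ⟨j0, a0, ha0, 0, le_rfl, by rw [hf0, zero_smul]⟩
  have hLoc : ∀ z ∈ Gbar e, ∃ a, a ∈ A ∧ LocAdm (f γ) (Gbar e) z a :=
    locAdmSet_nonempty hAsne (hJ γ) (h0 γ) (hEe γ) hzero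
  have hchains : ∀ c : Set {p : ℝ × (ℝ → Vec d) × (ℝ → Vec m) //
        SolP (f γ) A (Gbar e) x p},
      IsChain (extR (f γ) A (Gbar e) x) c →
        ∃ ub, ∀ p ∈ c, extR (f γ) A (Gbar e) x p ub := by
    intro c hc
    rcases chainBound hFc hAm hFb hGcl hx ha₀ c hc with h | h
    · obtain ⟨α, y, h1, h2, h3, h4⟩ := h
      exact absurd ⟨α, y, h1, h2, h3, h4⟩ hcon
    · exact h
  obtain ⟨mp, hmp⟩ := exists_maximal_of_chains_bounded hchains
    (fun {a b c} hab hbc => extR_trans hab hbc)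
  obtain ⟨q, hq, hqlt⟩ := extendMax hFc hAm hFb hLoc mp
  have hle := (hmp q hq).1
  exact absurd hle (not_le.2 hqlt)
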